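/- Let s ≥ 1, let a : Fin s → ℝ with a i > 0 for all i, and let l be a real number with 0 < l and l < a i for all i. Then for every i ∈ Fin s, each of the three sets CL(ā,l) ∩ {x : x_i = 0}, CL(ā,l) ∩ {x : x_i = a_i}, and CL(ā,l) ∩ {x : x_i − x_{i+1 (mod s)} = a_i − l} has affine span of dimension s − 1 (i.e., the finrank of the direction of its affine span is s − 1); hence CL(ā,l) has exactly 3s facets, defined by the equalities x_i = 0, x_i = a_i, and x_i − x_{i+1} = a_i − l. -/

import Mathlib

open Module

private lemma li_single {ι : Type*} [Fintype ι] [DecidableEq ι] {ε : ℝ} (hε : ε ≠ 0) :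
    LinearIndependent ℝ (fun j : ι => (Pi.single j ε : ι → ℝ)) := by
  rw [Fintype.linearIndependent_iff]
  intro g hg j
  have h := congrFun hg j
  simp only [Finset.sum_apply, Pi.smul_apply, Pi.single_apply, smul_eq_mul, Pi.zero_apply,
    mul_ite, mul_zero] at h
  rw [Finset.sum_ite_eq Finset.univ j (fun x => g x * ε)] at h
  simp only [Finset.mem_univ, if_true] at h
  exact (mul_eq_zero.1 h).resolve_right hε

private lemma facet_finrank {s : ℕ} [NeZero s] (S : Set (Fin s → ℝ))
    (f : (Fin s → ℝ) →ₗ[ℝ] ℝ) (c : ℝ) (hf : f ≠ 0)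
    (hS : ∀ x ∈ S, f x = c)
    (i : Fin s) (p : Fin s → ℝ) (ε : ℝ) (hε : ε ≠ 0)
    (v : Fin s → (Fin s → ℝ))
    (hp : p ∈ S) (hpv : ∀ j, j ≠ i → p + v j ∈ S)
    (hv : ∀ j k, j ≠ i → k ≠ i → v j k = if k = j then ε else 0) :
    Module.finrank ℝ (affineSpan ℝ S).direction = s - 1 := by
  rw [direction_affineSpan]
  have hub : vectorSpan ℝ S ≤ LinearMap.ker f := by
    rw [vectorSpan_def]
    apply Submodule.span_le.2
    rintro z ⟨x, hx, y, hy, rfl⟩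
    simp only [SetLike.mem_coe, LinearMap.mem_ker, vsub_eq_sub, map_sub, hS x hx, hS y hy,
      sub_self]
  have hne : vectorSpan ℝ S ≠ ⊤ := by
    intro h
    exact hf (LinearMap.ker_eq_top.1 (top_le_iff.1 (h ▸ hub)))
  have hlt : finrank ℝ (vectorSpan ℝ S) < s := by
    have := Submodule.finrank_lt (K := ℝ) (V := Fin s → ℝ) hne
    rwa [finrank_fin_fun] at this
  set u : {j : Fin s // j ≠ i} → (Fin s → ℝ) := fun j => v j with hu_def
  have hu : LinearIndependent ℝ u := by
    apply LinearIndependent.of_comp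
      (LinearMap.funLeft ℝ ℝ (Subtype.val : {j : Fin s // j ≠ i} → Fin s))
    have heq : (LinearMap.funLeft ℝ ℝ (Subtype.val : {j : Fin s // j ≠ i} → Fin s)) ∘ u
        = fun j => Pi.single j ε := by
      funext j k
      simp only [Function.comp_apply, LinearMap.funLeft_apply, hu_def]
      rw [hv j.1 k.1 j.2 k.2, Pi.single_apply]
      simp [Subtype.ext_iff]
    rw [heq]
    exact li_single hε
  have humem : ∀ j, u j ∈ vectorSpan ℝ S := by
    intro j
    have h1 : u j = (p + v j.1) -ᵥ p := by simp [hu_def, vsub_eq_sub]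
    rw [h1]
    exact vsub_mem_vectorSpan ℝ (hpv j.1 j.2) hp
  have hlb : s - 1 ≤ finrank ℝ (vectorSpan ℝ S) := by
    have hspan : Submodule.span ℝ (Set.range u) ≤ vectorSpan ℝ S :=
      Submodule.span_le.2 (Set.range_subset_iff.2 humem)
    have h1 : finrank ℝ (Submodule.span ℝ (Set.range u)) = Fintype.card {j : Fin s // j ≠ i} :=
      finrank_span_eq_card hu
    have h2 : Fintype.card {j : Fin s // j ≠ i} = s - 1 := by
      rw [Fintype.card_subtype_compl, Fintype.card_subtype_eq, Fintype.card_fin]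
    calc s - 1 = finrank ℝ (Submodule.span ℝ (Set.range u)) := by rw [h1, h2]
    _ ≤ finrank ℝ (vectorSpan ℝ S) := Submodule.finrank_mono hspan
  omega

/-- The chainlink polytope `CL(ā,l) ⊆ ℝ^s` (indices taken cyclically). -/
def chainlink (s : ℕ) [NeZero s] (a : Fin s → ℝ) (l : ℝ) : Set (Fin s → ℝ) :=
  {x | (∀ i, 0 ≤ x i ∧ x i ≤ a i) ∧ ∀ i, x i - x (i + 1) ≤ a i - l}

/-- when `0 < l < aᵢ` for all `i`, each of the `3s` sets obtained by
intersecting `CL(ā,l)` with one of the defining hyperplanes `xᵢ = 0`, `xᵢ = aᵢ`,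
`xᵢ − x_{i+1} = aᵢ − l` has affine span of dimension `s − 1`; hence `CL(ā,l)` has
exactly `3s` facets. -/
theorem chainlink_facets
    (s : ℕ) [NeZero s] (a : Fin s → ℝ) (ha : ∀ i, 0 < a i)
    (l : ℝ) (hl : 0 < l) (hla : ∀ i, l < a i) (i : Fin s) :
    Module.finrank ℝ
        (affineSpan ℝ (chainlink s a l ∩ {x | x i = 0})).direction = s - 1 ∧
    Module.finrank ℝ
        (affineSpan ℝ (chainlink s a l ∩ {x | x i = a i})).direction = s - 1 ∧
    Module.finrank ℝ
        (affineSpan ℝ (chainlink s a l ∩ {x | x i - x (i + 1) = a i - l})).direction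
      = s - 1 := by
  have hne : (Finset.univ : Finset (Fin s)).Nonempty := Finset.univ_nonempty
  set δ := Finset.univ.inf' hne (fun j => a j - l) with hδ_def
  have hδ : ∀ j, δ ≤ a j - l := fun j => Finset.inf'_le _ (Finset.mem_univ j)
  have hδpos : 0 < δ := by
    obtain ⟨j, -, hj⟩ := Finset.exists_mem_eq_inf' hne (fun j => a j - l)
    rw [hδ_def, hj]; linarith [hla j]
  set ε := min l δ with hε_def
  have hε0 : 0 < ε := lt_min hl hδpos
  have hεl : ε ≤ l := min_le_left _ _
  have hεa : ∀ j, ε ≤ a j - l := fun j => le_trans (min_le_right _ _) (hδ j)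
  have hsingle : ∀ (j k : Fin s), 0 ≤ (Pi.single j ε : Fin s → ℝ) k ∧
      (Pi.single j ε : Fin s → ℝ) k ≤ ε := by
    intro j k
    rw [Pi.single_apply]
    split <;> constructor <;> linarith
  refine ⟨?_, ?_, ?_⟩
  · -- facet x i = 0
    refine facet_finrank _ (LinearMap.proj i) 0 ?_ ?_ i 0 ε hε0.ne'
      (fun j => Pi.single j ε) ?_ ?_ ?_
    · intro h
      have := DFunLike.congr_fun h (Pi.single i (1:ℝ))
      simp [LinearMap.proj_apply] at this
    · rintro x ⟨-, hx⟩
      simpa [LinearMap.proj_apply] using hx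
    · refine ⟨⟨fun k => ⟨le_rfl, (ha k).le⟩, fun k => ?_⟩, ?_⟩
      · simp only [Pi.zero_apply, sub_zero]
        linarith [hla k]
      · simp
    · intro j hj
      rw [zero_add]
      refine ⟨⟨fun k => ⟨(hsingle j k).1, ?_⟩, fun k => ?_⟩, ?_⟩
      · linarith [(hsingle j k).2, hεa k, hl]
      · linarith [(hsingle j k).2, (hsingle j (k+1)).1, hεa k]
      · show (Pi.single j ε : Fin s → ℝ) i = 0
        exact Pi.single_eq_of_ne (M := fun _ => ℝ) (Ne.symm hj) ε
    · intro j k hj hk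
      show (Pi.single j ε : Fin s → ℝ) k = if k = j then ε else 0
      exact Pi.single_apply j ε k
  · -- facet x i = a i
    refine facet_finrank _ (LinearMap.proj i) (a i) ?_ ?_ i a (-ε) (neg_ne_zero.2 hε0.ne')
      (fun j => Pi.single j (-ε)) ?_ ?_ ?_
    · intro h
      have := DFunLike.congr_fun h (Pi.single i (1:ℝ))
      simp [LinearMap.proj_apply] at this
    · rintro x ⟨-, hx⟩
      simpa [LinearMap.proj_apply] using hx
    · refine ⟨⟨fun k => ⟨(ha k).le, le_rfl⟩, fun k => ?_⟩, rfl⟩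
      linarith [hla (k+1)]
    · intro j hj
      have hb : ∀ k, -ε ≤ (Pi.single j (-ε) : Fin s → ℝ) k ∧
          (Pi.single j (-ε) : Fin s → ℝ) k ≤ 0 := by
        intro k
        rw [Pi.single_apply]
        split <;> constructor <;> linarith
      refine ⟨⟨fun k => ?_, fun k => ?_⟩, ?_⟩
      · simp only [Pi.add_apply]
        constructor
        · linarith [(hb k).1, hεa k, hl]
        · linarith [(hb k).2]
      · simp only [Pi.add_apply]
        linarith [(hb k).2, (hb (k+1)).1, hεa (k+1)]
      · show a i + (Pi.single j (-ε) : Fin s → ℝ) i = a i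
        rw [Pi.single_eq_of_ne (Ne.symm hj)]
        ring
    · intro j k hj hk
      show (Pi.single j (-ε) : Fin s → ℝ) k = if k = j then -ε else 0
      exact Pi.single_apply j (-ε) k
  · -- facet x i - x (i+1) = a i - l
    by_cases hii : (i + 1 : Fin s) = i
    · have hempty : chainlink s a l ∩ {x | x i - x (i + 1) = a i - l} = ∅ := by
        ext x
        simp only [Set.mem_inter_iff, Set.mem_setOf_eq, Set.mem_empty_iff_false, iff_false,
          not_and]
        intro _
        rw [hii, sub_self]
        intro h
        linarith [hla i]
      have hs1 : s = 1 := by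
        have h1 : (1 : Fin s) = 0 := by
          have := hii
          nth_rewrite 2 [show i = i + 0 from (add_zero i).symm] at this
          exact add_left_cancel this
        have h2 : (1 : Fin s).val = 0 := by rw [h1]; exact Fin.val_zero s
        rw [Fin.val_one'] at h2
        exact Nat.dvd_one.mp (Nat.dvd_of_mod_eq_zero h2)
      rw [hempty, AffineSubspace.span_empty, AffineSubspace.direction_bot, finrank_bot, hs1]
    · -- s ≥ 2 effectively
      set p : Fin s → ℝ := fun k => if k = i + 1 then l else a k with hp_def
      set v : Fin s → (Fin s → ℝ) := fun j k =>
        -((Pi.single j ε : Fin s → ℝ) k) - (if j = i + 1 then (Pi.single i ε : Fin s → ℝ) k else 0) with hv_def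
      have hpl : ∀ k, l ≤ p k := by
        intro k
        simp only [hp_def]
        split
        · exact le_rfl
        · exact (hla k).le
      have hpa : ∀ k, p k ≤ a k := by
        intro k
        simp only [hp_def]
        split
        · next h => rw [h]; exact (hla (i+1)).le
        · exact le_rfl
      have hpi : p i = a i := by
        simp only [hp_def]
        rw [if_neg (fun h => hii h.symm : ¬ i = i + 1)]
      have hpi1 : p (i + 1) = l := by simp [hp_def]
      have hpk1 : ∀ k, k ≠ i → p (k + 1) = a (k + 1) := by
        intro k hk
        simp only [hp_def]
        have h : k + 1 ≠ i + 1 := fun h => hk (add_right_cancel h)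
        rw [if_neg h]
      have hvb : ∀ j k, -ε ≤ v j k ∧ v j k ≤ 0 := by
        intro j k
        simp only [hv_def, Pi.single_apply]
        split_ifs with h1 h2 h3 <;> constructor <;> try linarith
        all_goals (exfalso; exact hii (h2 ▸ h1 ▸ h3))
      have hii' : ¬ i = i + 1 := fun h => hii h.symm
      have hveq : ∀ j, j ≠ i → v j i = v j (i + 1) := by
        intro j hj
        by_cases hji : j = i + 1
        · subst hji
          simp [hv_def, Pi.single_apply, hii, hii']
        · have hj' : ¬ i = j := fun h => hj h.symm
          have hji' : ¬ i + 1 = j := fun h => hji h.symm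
          simp [hv_def, Pi.single_apply, hji, hj', hji']
      refine facet_finrank _ ((LinearMap.proj i : (Fin s → ℝ) →ₗ[ℝ] ℝ) - LinearMap.proj (i+1)) (a i - l) ?_ ?_ i p (-ε)
        (neg_ne_zero.2 hε0.ne') v ?_ ?_ ?_
      · intro h
        have := DFunLike.congr_fun h (Pi.single i (1:ℝ))
        simp only [LinearMap.sub_apply, LinearMap.proj_apply, LinearMap.zero_apply,
          Pi.single_eq_same, Pi.single_eq_of_ne hii] at this
        linarith
      · rintro x ⟨-, hx⟩
        simpa [LinearMap.sub_apply, LinearMap.proj_apply] using hx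
      · -- p ∈ S
        refine ⟨⟨fun k => ⟨?_, hpa k⟩, fun k => ?_⟩, ?_⟩
        · linarith [hpl k]
        · by_cases hk : k = i
          · subst hk
            rw [hpi, hpi1]
          · rw [hpk1 k hk]
            linarith [hpa k, hla (k+1)]
        · show p i - p (i+1) = a i - l
          rw [hpi, hpi1]
      · -- p + v j ∈ S
        intro j hj
        refine ⟨⟨fun k => ?_, fun k => ?_⟩, ?_⟩
        · simp only [Pi.add_apply]
          constructor
          · linarith [(hvb j k).1, hpl k, hεl]
          · linarith [(hvb j k).2, hpa k]
        · simp only [Pi.add_apply]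
          by_cases hk : k = i
          · subst hk
            rw [hpi, hpi1, hveq j hj]
            linarith
          · rw [hpk1 k hk]
            linarith [(hvb j k).2, (hvb j (k+1)).1, hpa k, hεa (k+1)]
        · show (p i + v j i) - (p (i+1) + v j (i+1)) = a i - l
          rw [hpi, hpi1, hveq j hj]
          ring
      · intro j k hj hk
        simp only [hv_def, Pi.single_apply, if_neg hk]
        split_ifs with h1 h2 <;> ring
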